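/- Let a, c, d ∈ ℂ and b, e ∈ ℝ. Suppose that for all λ ∈ ℂ, 2·Re(|λ|²·λ·a) + 4·|λ|²·b + 2·Re(λ²·c) + 2·Re(λ·d) + e ≤ 0. Then 2b + |c| ≤ 0; in particular b ≤ 0. -/

import Mathlib

/-- Quadratic-term constraint: if
`2·Re(|l|²·l·a) + 4·|l|²·b + 2·Re(l²·c) + 2·Re(l·d) + e ≤ 0` for all `l ∈ ℂ`,
then `2b + |c| ≤ 0`; in particular `b ≤ 0`. -/
theorem quadratic_coeff_constraint (a c d : ℂ) (b e : ℝ)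
    (h : ∀ l : ℂ,
      2 * (((‖l‖ : ℂ) ^ 2) * l * a).re + 4 * (‖l‖) ^ 2 * b
        + 2 * (l ^ 2 * c).re + 2 * (l * d).re + e ≤ 0) :
    2 * b + ‖c‖ ≤ 0 ∧ b ≤ 0 := by
  obtain ⟨u, hu1, hu2⟩ : ∃ u : ℂ, ‖u‖ = 1 ∧ u ^ 2 * c = ((‖c‖ : ℝ) : ℂ) := by
    by_cases hc : c = 0
    · exact ⟨1, by simp, by simp [hc]⟩
    · refine ⟨Complex.exp ((-(c.arg) / 2 : ℝ) * Complex.I), ?_, ?_⟩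
      · exact Complex.norm_exp_ofReal_mul_I _
      · rw [sq, ← Complex.exp_add]
        have h2 : ((-(c.arg) / 2 : ℝ) : ℂ) * Complex.I + ((-(c.arg) / 2 : ℝ) : ℂ) * Complex.I
            = -(c.arg * Complex.I) := by push_cast; ring
        rw [h2]
        nth_rewrite 2 [← Complex.norm_mul_exp_arg_mul_I c]
        rw [Complex.exp_neg]
        field_simp [Complex.exp_ne_zero]
  have key : ∀ t : ℝ, 0 ≤ t → 8 * t ^ 2 * b + 4 * t ^ 2 * ‖c‖ + 2 * e ≤ 0 := by
    intro t ht
    have h1 := h ((t : ℂ) * u)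
    have h2 := h (-((t : ℂ) * u))
    have habs : ‖(t : ℂ) * u‖ = t := by
      simp [norm_mul, hu1, Complex.norm_real, abs_of_nonneg ht]
    rw [habs] at h1
    rw [norm_neg, habs] at h2
    have hsq : (((t : ℂ) * u) ^ 2 * c) = ((t ^ 2 * ‖c‖ : ℝ) : ℂ) := by
      rw [mul_pow, mul_assoc, hu2]; push_cast; ring
    have hsq' : ((-((t : ℂ) * u)) ^ 2 * c) = ((t ^ 2 * ‖c‖ : ℝ) : ℂ) := by
      rw [show (-((t : ℂ) * u)) ^ 2 = ((t : ℂ) * u) ^ 2 from by ring, hsq]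
    rw [hsq, Complex.ofReal_re] at h1
    rw [hsq', Complex.ofReal_re] at h2
    have e1 : ((t : ℂ) ^ 2 * -((t : ℂ) * u) * a).re = -((t : ℂ) ^ 2 * ((t : ℂ) * u) * a).re := by
      rw [← Complex.neg_re]; ring_nf
    have e2 : (-((t : ℂ) * u) * d).re = -(((t : ℂ) * u) * d).re := by
      rw [← Complex.neg_re]; ring_nf
    rw [e1, e2] at h2
    linarith
  have hb2 : 2 * b + ‖c‖ ≤ 0 := by
    by_contra hpos
    push_neg at hpos
    set s := 2 * b + ‖c‖ with hs
    have hs0 : 0 < s := hpos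
    set t := Real.sqrt (max 1 ((-2 * e + 1) / (4 * s))) with htdef
    have ht0 : 0 ≤ t := Real.sqrt_nonneg _
    have ht2 : t ^ 2 = max 1 ((-2 * e + 1) / (4 * s)) := by
      rw [htdef, Real.sq_sqrt (le_trans zero_le_one (le_max_left _ _))]
    have hineq := key t ht0
    have hge : t ^ 2 ≥ (-2 * e + 1) / (4 * s) := ht2 ▸ le_max_right _ _
    have hlin : -2 * e + 1 ≤ t ^ 2 * (4 * s) := (div_le_iff₀ (by linarith)).mp hge
    nlinarith [hineq, hlin]
  refine ⟨hb2, ?_⟩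
  have := norm_nonneg c
  linarith
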